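/- Reduction to the strongest cyclic inequalities: let n ≥ 2 and let S be a real-valued function on the subsets of {1,…,n} with S(∅) = 0 satisfying, for all pairwise disjoint X, Y, Z ⊆ {1,…,n}, strong subadditivity S(X∪Y) + S(Y∪Z) ≥ S(Y) + S(X∪Y∪Z) and weak monotonicity S(X∪Y) + S(Y∪Z) ≥ S(X) + S(Z). Suppose furthermore that for every integer l ≥ 1 and every partition of {1,…,n} into 2l+1 cyclically consecutive nonempty blocks B_1,…,B_{2l+1}, the coarse-grained entropies Ŝ(J) := S(∪_{j∈J} B_j), J ⊆ {1,…,2l+1}, satisfy the cyclic inequality C_{2l+1}(l+1, l) ≥ 0. Then: if n = 2k+1 with k ≥ 1, C_n(k+1, k−1) ≥ 0; and if n = 2k with k ≥ 1, both C_n(k+1, k−1) ≥ 0 and C_n(k, k−1) ≥ 0. -/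

import Mathlib

/-- The cyclic window of `a` consecutive elements starting at `i` (indices mod `n`);
summing over all `i` this gives the windows `{i+1,…,i+a}` of the paper. -/
def cycWindow (n i a : ℕ) : Finset (Fin n) :=
  Finset.univ.filter fun j => ∃ t < a, (i + t) % n = (j : ℕ)

/-- `C_n(a) = Σ_{i=1}^n S({i+1,…,i+a})` -/
noncomputable def cycC {n : ℕ} (S : Finset (Fin n) → ℝ) (a : ℕ) : ℝ :=
  ∑ i ∈ Finset.range n, S (cycWindow n i a)

/-- `C_n(a,b) = C_n(a) − C_n(b) − S({1,…,n})` -/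
noncomputable def cycCab {n : ℕ} (S : Finset (Fin n) → ℝ) (a b : ℕ) : ℝ :=
  cycC S a - cycC S b - S Finset.univ


lemma mem_cycWindow {n i a : ℕ} {j : Fin n} :
    j ∈ cycWindow n i a ↔ ∃ t < a, (i + t) % n = (j : ℕ) := by
  simp [cycWindow]

lemma mod_ne_of_lt {n x y : ℕ} (hxy : x < y) (h : y - x < n) : x % n ≠ y % n := by
  intro h'
  have hd := (Nat.modEq_iff_dvd' hxy.le).1 h'
  have := Nat.le_of_dvd (by omega) hd
  omega

lemma mod_eq_add_right {n u v : ℕ} (h : u = v + n) : u % n = v % n := by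
  subst h; exact Nat.add_mod_right v n

lemma cycWindow_congr {n i i' : ℕ} (a : ℕ) (h : i % n = i' % n) :
    cycWindow n i a = cycWindow n i' a := by
  have key : ∀ t, (i + t) % n = (i' + t) % n := fun t => by
    rw [← Nat.mod_add_mod, h, Nat.mod_add_mod]
  ext j; simp only [mem_cycWindow]
  constructor <;> rintro ⟨t, ht, hj⟩
  · exact ⟨t, ht, by rw [← key]; exact hj⟩
  · exact ⟨t, ht, by rw [key]; exact hj⟩

lemma cycWindow_zero (n i : ℕ) : cycWindow n i 0 = ∅ := by
  ext j; simp [mem_cycWindow]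

lemma cycWindow_union {n : ℕ} (i : ℕ) {a b : ℕ} (h : a + b ≤ n) :
    cycWindow n i a ∪ cycWindow n (i + a) b = cycWindow n i (a + b) := by
  ext j
  simp only [Finset.mem_union, mem_cycWindow]
  constructor
  · rintro (⟨t, ht, hj⟩ | ⟨t, ht, hj⟩)
    · exact ⟨t, by omega, hj⟩
    · exact ⟨a + t, by omega, by rw [show i + (a + t) = i + a + t by ring]; exact hj⟩
  · rintro ⟨t, ht, hj⟩
    rcases lt_or_ge t a with h' | h'
    · exact Or.inl ⟨t, h', hj⟩
    · exact Or.inr ⟨t - a, by omega, by rw [show i + a + (t - a) = i + t by omega]; exact hj⟩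

lemma cycWindow_disjoint {n : ℕ} (i : ℕ) {a b : ℕ} (h : a + b ≤ n) :
    Disjoint (cycWindow n i a) (cycWindow n (i + a) b) := by
  rw [Finset.disjoint_left]
  rintro j hj1 hj2
  rw [mem_cycWindow] at hj1 hj2
  obtain ⟨t, ht, hj⟩ := hj1
  obtain ⟨t', ht', hj'⟩ := hj2
  exact mod_ne_of_lt (x := i + t) (y := i + a + t') (by omega) (by omega) (hj.trans hj'.symm)

lemma cycWindow_univ {n : ℕ} (hn : 0 < n) (i : ℕ) : cycWindow n i n = Finset.univ := by
  ext j
  simp only [mem_cycWindow, Finset.mem_univ, iff_true]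
  have hr : i % n < n := Nat.mod_lt _ hn
  have hj : (j : ℕ) < n := j.isLt
  refine ⟨(n - i % n + (j : ℕ)) % n, Nat.mod_lt _ hn, ?_⟩
  rw [Nat.add_mod_mod, ← Nat.mod_add_mod, show i % n + (n - i % n + (j:ℕ)) = (j:ℕ) + n by omega,
    Nat.add_mod_right, Nat.mod_eq_of_lt hj]

lemma cycWindow_one {n : ℕ} (j : Fin n) : cycWindow n (j : ℕ) 1 = {j} := by
  ext x
  simp only [mem_cycWindow, Finset.mem_singleton]
  constructor
  · rintro ⟨t, ht, hx⟩
    interval_cases t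
    · exact Fin.ext (by rw [← hx]; simp [Nat.mod_eq_of_lt j.isLt])
  · rintro rfl
    exact ⟨0, Nat.zero_lt_one, by simp [Nat.mod_eq_of_lt x.isLt]⟩

lemma biUnion_cycWindow_one {n : ℕ} (J : Finset (Fin n)) :
    J.biUnion (fun j => cycWindow n (j : ℕ) 1) = J := by
  ext x
  simp [Finset.mem_biUnion, cycWindow_one]

lemma cycWindow_succ {n : ℕ} (i : ℕ) {a : ℕ} (h : a < n) :
    cycWindow n i (a + 1) =
      insert ⟨(i + a) % n, Nat.mod_lt _ (by omega)⟩ (cycWindow n i a) := by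
  ext j
  simp only [mem_cycWindow, Finset.mem_insert]
  constructor
  · rintro ⟨t, ht, hj⟩
    rcases eq_or_lt_of_le (Nat.lt_succ_iff.1 ht) with rfl | ht'
    · exact Or.inl (Fin.ext hj.symm)
    · exact Or.inr ⟨t, ht', hj⟩
  · rintro (rfl | ⟨t, ht, hj⟩)
    · exact ⟨a, by omega, rfl⟩
    · exact ⟨t, by omega, hj⟩

lemma sum_shift {n : ℕ} (hn : 0 < n) (f : ℕ → ℝ) (hf : ∀ x, f (x % n) = f x) (d : ℕ) :
    ∑ s ∈ Finset.range n, f (s + d) = ∑ s ∈ Finset.range n, f s := by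
  have hd := Nat.div_add_mod d n
  have hdn : d % n < n := Nat.mod_lt _ hn
  have hexp : n * (d / n + 1) = n * (d / n) + n := by ring
  refine Finset.sum_nbij' (i := fun s => (s + d) % n) (j := fun s => (s + (n - d % n)) % n)
    ?_ ?_ ?_ ?_ ?_
  · intro a _; exact Finset.mem_range.2 (Nat.mod_lt _ hn)
  · intro a _; exact Finset.mem_range.2 (Nat.mod_lt _ hn)
  · intro a ha
    rw [Finset.mem_range] at ha
    show ((a + d) % n + (n - d % n)) % n = a
    rw [Nat.mod_add_mod, show a + d + (n - d % n) = a + n * (d / n + 1) by omega,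
      Nat.add_mul_mod_self_left, Nat.mod_eq_of_lt ha]
  · intro a ha
    rw [Finset.mem_range] at ha
    show ((a + (n - d % n)) % n + d) % n = a
    rw [Nat.mod_add_mod, show a + (n - d % n) + d = a + n * (d / n + 1) by omega,
      Nat.add_mul_mod_self_left, Nat.mod_eq_of_lt ha]
  · intro a _
    exact (hf (a + d)).symm

lemma cycC_shift {n : ℕ} (hn : 0 < n) (S : Finset (Fin n) → ℝ) (b d : ℕ) :
    ∑ s ∈ Finset.range n, S (cycWindow n (s + d) b) = cycC S b := by
  unfold cycC
  exact sum_shift hn (fun x => S (cycWindow n x b))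
    (fun x => by show S (cycWindow n (x % n) b) = S (cycWindow n x b); rw [cycWindow_congr b (Nat.mod_mod_of_dvd x dvd_rfl)]) d

lemma S_nonneg {n : ℕ} (S : Finset (Fin n) → ℝ) (h0 : S ∅ = 0)
    (hWM : ∀ X Y Z : Finset (Fin n), Disjoint X Y → Disjoint Y Z → Disjoint X Z →
      S (X ∪ Y) + S (Y ∪ Z) ≥ S X + S Z) (A : Finset (Fin n)) : 0 ≤ S A := by
  have := hWM ∅ A ∅ (by simp) (by simp) (by simp)
  simp [h0] at this
  linarith

lemma cycC_concave {n : ℕ} (S : Finset (Fin n) → ℝ)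
    (hSSA : ∀ X Y Z : Finset (Fin n), Disjoint X Y → Disjoint Y Z → Disjoint X Z →
      S (X ∪ Y) + S (Y ∪ Z) ≥ S Y + S (X ∪ Y ∪ Z))
    {a : ℕ} (ha : a + 2 ≤ n) :
    cycC S a + cycC S (a + 2) ≤ cycC S (a + 1) + cycC S (a + 1) := by
  have hn : 0 < n := by omega
  have key : ∀ i : ℕ, S (cycWindow n (i + 1) a) + S (cycWindow n i (a + 2))
      ≤ S (cycWindow n i (a + 1)) + S (cycWindow n (i + 1) (a + 1)) := by
    intro i
    have dXY : Disjoint (cycWindow n i 1) (cycWindow n (i + 1) a) :=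
      cycWindow_disjoint i (by omega)
    have dYZ : Disjoint (cycWindow n (i + 1) a) (cycWindow n (i + 1 + a) 1) :=
      cycWindow_disjoint (i + 1) (by omega)
    have h1 : cycWindow n i 1 ∪ cycWindow n (i + 1) a = cycWindow n i (1 + a) :=
      cycWindow_union i (by omega)
    have h2 : cycWindow n (i + 1) a ∪ cycWindow n (i + 1 + a) 1 = cycWindow n (i + 1) (a + 1) :=
      cycWindow_union (i + 1) (by omega)
    have h3 : cycWindow n i (1 + a) ∪ cycWindow n (i + 1 + a) 1 = cycWindow n i (a + 2) := by
      have h4 := cycWindow_union (n := n) (a := 1 + a) (b := 1) i (by omega)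
      rw [show i + (1 + a) = i + 1 + a by ring] at h4
      rw [h4]; congr 1; omega
    have dXZ : Disjoint (cycWindow n i 1) (cycWindow n (i + 1 + a) 1) := by
      have hbig : Disjoint (cycWindow n i (1 + a)) (cycWindow n (i + 1 + a) 1) := by
        have := cycWindow_disjoint (n := n) (a := 1 + a) (b := 1) i (by omega)
        rwa [show i + (1 + a) = i + 1 + a by ring] at this
      exact Disjoint.mono_left (h1 ▸ Finset.subset_union_left) hbig
    have hS := hSSA (cycWindow n i 1) (cycWindow n (i + 1) a) (cycWindow n (i + 1 + a) 1)
      dXY dYZ dXZ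
    rw [h1, h2, h3] at hS
    rw [show 1 + a = a + 1 by ring] at hS
    linarith
  calc cycC S a + cycC S (a + 2)
      = ∑ i ∈ Finset.range n, (S (cycWindow n (i + 1) a) + S (cycWindow n i (a + 2))) := by
        rw [Finset.sum_add_distrib, cycC_shift hn S a 1]; rfl
    _ ≤ ∑ i ∈ Finset.range n, (S (cycWindow n i (a + 1)) + S (cycWindow n (i + 1) (a + 1))) :=
        Finset.sum_le_sum fun i _ => key i
    _ = cycC S (a + 1) + cycC S (a + 1) := by
        rw [Finset.sum_add_distrib, cycC_shift hn S (a + 1) 1]; rfl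

lemma sum_Iio_val {m : ℕ} (j : Fin m) (g : ℕ → ℕ) :
    ∑ j' ∈ Finset.Iio j, g (j' : ℕ) = ∑ t ∈ Finset.range (j : ℕ), g t := by
  rw [← Nat.Iio_eq_range, ← Fin.map_valEmbedding_Iio, Finset.sum_map]
  rfl

lemma offsum (v : ℕ) :
    ∑ t ∈ Finset.range v, (if t = 0 then 2 else 1) = if v = 0 then 0 else v + 1 := by
  induction v with
  | zero => simp
  | succ v ih =>
    rw [Finset.sum_range_succ, ih]
    rcases Nat.eq_zero_or_pos v with rfl | hv
    · simp
    · rw [if_neg (by omega), if_neg (by omega), if_neg (by omega)]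

/-- Union of blocks `i, i+1, …, i+a−1` (block 0 has size 2, others size 1) is a window. -/
lemma blocks_union (m s : ℕ) (hm : 0 < m) :
    ∀ a, a ≤ m → ∀ i, i < m →
    (cycWindow m i a).biUnion
      (fun j => cycWindow (m + 1) (s + (if (j : ℕ) = 0 then 0 else (j : ℕ) + 1))
        (if (j : ℕ) = 0 then 2 else 1))
    = cycWindow (m + 1) (s + (if i = 0 then 0 else i + 1))
        (a + (if a ≠ 0 ∧ (i = 0 ∨ m < i + a) then 1 else 0)) := by
  intro a
  induction a with
  | zero => intro _ i _; simp [cycWindow_zero]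
  | succ a ih =>
    intro ha i hi
    rw [cycWindow_succ i (by omega), Finset.biUnion_insert, ih (by omega) i hi]
    have hjv : (i + a) % m = if i + a < m then i + a else i + a - m := by
      split_ifs with h
      · exact Nat.mod_eq_of_lt h
      · rw [Nat.mod_eq_sub_mod (by omega)]
        exact Nat.mod_eq_of_lt (by omega)
    have hsz1 : (a + 1) + (if a + 1 ≠ 0 ∧ (i = 0 ∨ m < i + (a + 1)) then 1 else 0)
        = (a + (if a ≠ 0 ∧ (i = 0 ∨ m < i + a) then 1 else 0))
          + (if (i + a) % m = 0 then 2 else 1) := by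
      rw [hjv]; split_ifs <;> omega
    have hcase : s + (if i = 0 then 0 else i + 1)
          + (a + (if a ≠ 0 ∧ (i = 0 ∨ m < i + a) then 1 else 0))
          = s + (if (i + a) % m = 0 then 0 else (i + a) % m + 1)
        ∨ s + (if i = 0 then 0 else i + 1)
          + (a + (if a ≠ 0 ∧ (i = 0 ∨ m < i + a) then 1 else 0))
          = s + (if (i + a) % m = 0 then 0 else (i + a) % m + 1) + (m + 1) := by
      rw [hjv]; split_ifs <;> omega
    have hstart : (s + (if (i + a) % m = 0 then 0 else (i + a) % m + 1)) % (m + 1)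
        = (s + (if i = 0 then 0 else i + 1)
            + (a + (if a ≠ 0 ∧ (i = 0 ∨ m < i + a) then 1 else 0))) % (m + 1) := by
      rcases hcase with h | h
      · rw [← h]
      · exact (mod_eq_add_right h).symm
    have hle : (a + (if a ≠ 0 ∧ (i = 0 ∨ m < i + a) then 1 else 0))
        + (if (i + a) % m = 0 then 2 else 1) ≤ m + 1 := by
      rw [hjv]; split_ifs <;> omega
    beta_reduce
    rw [show (((⟨(i + a) % m, Nat.mod_lt _ (by omega : 0 < m)⟩ : Fin m) : ℕ)) = (i + a) % m
      from rfl]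
    rw [cycWindow_congr (n := m + 1) (if (i + a) % m = 0 then 2 else 1) hstart,
      Finset.union_comm, cycWindow_union _ hle, hsz1]

lemma count_lemma (m a : ℕ) (ha1 : 1 ≤ a) (ham : a ≤ m) (F : ℕ → ℝ) :
    ∑ i ∈ Finset.range m, F (a + (if a ≠ 0 ∧ (i = 0 ∨ m < i + a) then 1 else 0))
      = (a : ℝ) * F (a + 1) + ((m - a : ℕ) : ℝ) * F a := by
  have step1 : ∀ i ∈ Finset.range m,
      F (a + (if a ≠ 0 ∧ (i = 0 ∨ m < i + a) then 1 else 0))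
      = if i = 0 ∨ m < i + a then F (a + 1) else F a := by
    intro i _
    by_cases h : i = 0 ∨ m < i + a
    · rw [if_pos ⟨by omega, h⟩, if_pos h]
    · rw [if_neg (fun hc => h hc.2), if_neg h, Nat.add_zero]
  rw [Finset.sum_congr rfl step1, Finset.sum_ite]
  have hfil : (Finset.range m).filter (fun i => i = 0 ∨ m < i + a)
      = insert 0 (Finset.Ico (m + 1 - a) m) := by
    ext i
    simp only [Finset.mem_filter, Finset.mem_range, Finset.mem_Ico, Finset.mem_insert]
    omega
  have hcard1 : ((Finset.range m).filter (fun i => i = 0 ∨ m < i + a)).card = a := by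
    rw [hfil, Finset.card_insert_of_notMem (by simp only [Finset.mem_Ico]; omega),
      Nat.card_Ico]
    omega
  have hcard2 : ((Finset.range m).filter (fun i => ¬(i = 0 ∨ m < i + a))).card = m - a := by
    have := Finset.card_filter_add_card_filter_not
      (s := Finset.range m) (p := fun i => i = 0 ∨ m < i + a)
    rw [hcard1, Finset.card_range] at this
    omega
  rw [Finset.sum_const, Finset.sum_const, hcard1, hcard2, nsmul_eq_mul, nsmul_eq_mul]

lemma cycCab_congr {n : ℕ} {S1 S2 : Finset (Fin n) → ℝ} (h : ∀ J, S1 J = S2 J) (a b : ℕ) :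
    cycCab S1 a b = cycCab S2 a b := by
  have : S1 = S2 := funext h
  rw [this]

lemma cycC_zero {n : ℕ} (S : Finset (Fin n) → ℝ) (h0 : S ∅ = 0) : cycC S 0 = 0 := by
  unfold cycC
  simp [cycWindow_zero, h0]

noncomputable def coarseS {n : ℕ} (m : ℕ) (S : Finset (Fin n) → ℝ) (s : ℕ) :
    Finset (Fin m) → ℝ :=
  fun J => S (J.biUnion fun j =>
    cycWindow n (s + (if (j : ℕ) = 0 then 0 else (j : ℕ) + 1)) (if (j : ℕ) = 0 then 2 else 1))

lemma even_univ {n : ℕ} (m : ℕ) (hm : 0 < m) (hn : n = m + 1) (S : Finset (Fin n) → ℝ)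
    (s : ℕ) : coarseS m S s Finset.univ = S Finset.univ := by
  subst hn
  unfold coarseS
  congr 1
  have hu := blocks_union m s hm m le_rfl 0 hm
  rw [cycWindow_univ hm 0] at hu
  rw [hu, if_pos rfl, if_pos ⟨by omega, Or.inl rfl⟩]
  exact cycWindow_univ (by omega) _

lemma even_sum {n : ℕ} (m : ℕ) (hm : 0 < m) (hn : n = m + 1) (S : Finset (Fin n) → ℝ)
    (a : ℕ) (ha1 : 1 ≤ a) (ham : a ≤ m) :
    ∑ s ∈ Finset.range n, cycC (coarseS m S s) a
      = (a : ℝ) * cycC S (a + 1) + ((m - a : ℕ) : ℝ) * cycC S a := by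
  subst hn
  have hB : ∀ s : ℕ, ∀ i ∈ Finset.range m, coarseS m S s (cycWindow m i a)
      = S (cycWindow (m + 1) (s + (if i = 0 then 0 else i + 1))
          (a + (if a ≠ 0 ∧ (i = 0 ∨ m < i + a) then 1 else 0))) := fun s i hi =>
    congrArg S (blocks_union m s hm a ham i (Finset.mem_range.1 hi))
  calc ∑ s ∈ Finset.range (m + 1), cycC (coarseS m S s) a
      = ∑ s ∈ Finset.range (m + 1), ∑ i ∈ Finset.range m,
          S (cycWindow (m + 1) (s + (if i = 0 then 0 else i + 1))
            (a + (if a ≠ 0 ∧ (i = 0 ∨ m < i + a) then 1 else 0))) := by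
        refine Finset.sum_congr rfl fun s _ => ?_
        exact Finset.sum_congr rfl (hB s)
    _ = ∑ i ∈ Finset.range m, ∑ s ∈ Finset.range (m + 1),
          S (cycWindow (m + 1) (s + (if i = 0 then 0 else i + 1))
            (a + (if a ≠ 0 ∧ (i = 0 ∨ m < i + a) then 1 else 0))) := Finset.sum_comm
    _ = ∑ i ∈ Finset.range m,
          cycC S (a + (if a ≠ 0 ∧ (i = 0 ∨ m < i + a) then 1 else 0)) := by
        refine Finset.sum_congr rfl fun i _ => ?_
        exact cycC_shift (by omega) S _ _
    _ = (a : ℝ) * cycC S (a + 1) + ((m - a : ℕ) : ℝ) * cycC S a :=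
        count_lemma m a ha1 ham (cycC S)


/-- Reduction to the strongest cyclic inequalities: assume `S` is an
abstract entropy function with `S(∅) = 0` satisfying SSA and WM, and assume that for
every `l ≥ 1` and every partition of the cycle `{1,…,n}` into `2l+1` cyclically
consecutive nonempty blocks (given by a starting point `s` and block sizes `c j ≥ 1`
with `Σ c j = n`), the coarse-grained entropies `Ŝ(J) = S(∪_{j∈J} B_j)` satisfy
`C_{2l+1}(l+1,l) ≥ 0`.  Then `C_n(k+1,k−1) ≥ 0` for `n = 2k+1`, and both
`C_n(k+1,k−1) ≥ 0` and `C_n(k,k−1) ≥ 0` for `n = 2k`. -/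
theorem stmt15 (n : ℕ) (hn : 2 ≤ n) (S : Finset (Fin n) → ℝ) (h0 : S ∅ = 0)
    (hSSA : ∀ X Y Z : Finset (Fin n), Disjoint X Y → Disjoint Y Z → Disjoint X Z →
      S (X ∪ Y) + S (Y ∪ Z) ≥ S Y + S (X ∪ Y ∪ Z))
    (hWM : ∀ X Y Z : Finset (Fin n), Disjoint X Y → Disjoint Y Z → Disjoint X Z →
      S (X ∪ Y) + S (Y ∪ Z) ≥ S X + S Z)
    (hcyc : ∀ l : ℕ, 1 ≤ l → ∀ s : ℕ, ∀ c : Fin (2 * l + 1) → ℕ,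
      (∀ j, 1 ≤ c j) → (∑ j, c j) = n →
      0 ≤ cycCab (fun J : Finset (Fin (2 * l + 1)) =>
            S (J.biUnion fun j =>
              cycWindow n (s + ∑ j' ∈ Finset.Iio j, c j') (c j))) (l + 1) l) :
    (∀ k : ℕ, 1 ≤ k → n = 2 * k + 1 → 0 ≤ cycCab S (k + 1) (k - 1)) ∧
    (∀ k : ℕ, 1 ≤ k → n = 2 * k →
      0 ≤ cycCab S (k + 1) (k - 1) ∧ 0 ≤ cycCab S k (k - 1)) := by

  have hpos := S_nonneg S h0 hWM
  constructor
  · -- odd case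
    rintro k hk rfl
    have hsum1 : (∑ _j : Fin (2 * k + 1), 1) = 2 * k + 1 := by simp
    have hc := hcyc k hk 0 (fun _ => 1) (fun _ => le_refl 1) hsum1
    have hpt : ∀ J : Finset (Fin (2 * k + 1)),
        S (J.biUnion fun j => cycWindow (2 * k + 1) (0 + ∑ _j' ∈ Finset.Iio j, 1) 1) = S J := by
      intro J
      congr 1
      have hwin : ∀ j : Fin (2 * k + 1),
          cycWindow (2 * k + 1) (0 + ∑ _j' ∈ Finset.Iio j, 1) 1 = {j} := by
        intro j
        have : (0 + ∑ _j' ∈ Finset.Iio j, 1) = (j : ℕ) := by simp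
        rw [this]
        exact cycWindow_one j
      rw [Finset.biUnion_congr rfl fun j _ => hwin j]
      exact Finset.biUnion_singleton_eq_self
    have hc' : 0 ≤ cycCab S (k + 1) k := by
      rw [← cycCab_congr hpt (k + 1) k]
      exact hc
    have hconc := cycC_concave S hSSA (a := k - 1) (by omega)
    rw [show k - 1 + 2 = k + 1 by omega, show k - 1 + 1 = k by omega] at hconc
    have hSu := hpos Finset.univ
    unfold cycCab at hc' ⊢
    linarith
  · -- even case
    rintro k hk rfl
    have hSu := hpos Finset.univ
    rcases eq_or_lt_of_le hk with h1 | h2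
    · -- k = 1, n = 2
      subst h1
      have hC0 : cycC S 0 = 0 := cycC_zero S h0
      have hC2 : cycC S 2 = S Finset.univ + S Finset.univ := by
        show (∑ i ∈ Finset.range 2, S (cycWindow 2 i 2)) = _
        rw [Finset.sum_range_succ, Finset.sum_range_succ, Finset.sum_range_zero,
          cycWindow_univ (by omega) 0, cycWindow_univ (by omega) 1]
        ring
      have hC1 : cycC S 1 = S (cycWindow 2 0 1) + S (cycWindow 2 1 1) := by
        show (∑ i ∈ Finset.range 2, S (cycWindow 2 i 1)) = _
        rw [Finset.sum_range_succ, Finset.sum_range_succ, Finset.sum_range_zero]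
        ring
      have hu : cycWindow 2 0 1 ∪ cycWindow 2 1 1 = Finset.univ := by
        have h := cycWindow_union (n := 2) (a := 1) (b := 1) 0 (by omega)
        rw [show (0 + 1 : ℕ) = 1 from rfl] at h
        rw [h]
        exact cycWindow_univ (by omega) 0
      have hd : Disjoint (cycWindow 2 0 1) (cycWindow 2 1 1) := by
        have := cycWindow_disjoint (n := 2) (a := 1) (b := 1) 0 (by omega)
        rwa [show (0 + 1 : ℕ) = 1 from rfl] at this
      have hsub := hSSA (cycWindow 2 0 1) ∅ (cycWindow 2 1 1) (by simp) (by simp) hd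
      rw [h0, Finset.union_empty, Finset.empty_union, hu] at hsub
      constructor
      · show 0 ≤ cycCab S 2 0
        unfold cycCab
        rw [hC0, hC2]
        linarith
      · show 0 ≤ cycCab S 1 0
        unfold cycCab
        rw [hC0, hC1]
        linarith
    · -- k ≥ 2
      obtain ⟨l, rfl⟩ : ∃ l, k = l + 1 := ⟨k - 1, by omega⟩
      have hl : 1 ≤ l := by omega
      have hcs : (∑ j : Fin (2 * l + 1), (if (j : ℕ) = 0 then 2 else 1)) = 2 * (l + 1) := by
        rw [Fin.sum_univ_eq_sum_range (fun t => if t = 0 then 2 else 1) (2 * l + 1), offsum,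
          if_neg (by omega)]
        omega
      have hcoarse : ∀ s : ℕ, 0 ≤ cycCab (coarseS (2 * l + 1) S s) (l + 1) l := by
        intro s
        have hc : 0 ≤ cycCab (fun J : Finset (Fin (2 * l + 1)) =>
            S (J.biUnion fun j => cycWindow (2 * (l + 1))
              (s + ∑ j' ∈ Finset.Iio j, (if (j' : ℕ) = 0 then 2 else 1))
              (if (j : ℕ) = 0 then 2 else 1))) (l + 1) l :=
          hcyc l hl s (fun j => if (j : ℕ) = 0 then 2 else 1)
            (fun j => by split <;> omega) hcs
        have hpt2 : ∀ J : Finset (Fin (2 * l + 1)),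
            S (J.biUnion fun j => cycWindow (2 * (l + 1))
              (s + ∑ j' ∈ Finset.Iio j, (if (j' : ℕ) = 0 then 2 else 1))
              (if (j : ℕ) = 0 then 2 else 1)) = coarseS (2 * l + 1) S s J := by
          intro J
          unfold coarseS
          congr 1
          refine Finset.biUnion_congr rfl fun j _ => ?_
          have hoff : (∑ j' ∈ Finset.Iio j, (if (j' : ℕ) = 0 then 2 else 1))
              = (if (j : ℕ) = 0 then 0 else (j : ℕ) + 1) := by
            rw [sum_Iio_val j (fun t => if t = 0 then 2 else 1), offsum]
          rw [hoff]
        rw [← cycCab_congr hpt2 (l + 1) l]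
        exact hc
      have hsumpos : 0 ≤ ∑ s ∈ Finset.range (2 * (l + 1)),
          cycCab (coarseS (2 * l + 1) S s) (l + 1) l :=
        Finset.sum_nonneg fun s _ => hcoarse s
      have hnm : 2 * (l + 1) = (2 * l + 1) + 1 := by ring
      have hm : 0 < 2 * l + 1 := by omega
      have hes1 := even_sum (2 * l + 1) hm hnm S (l + 1) (by omega) (by omega)
      have hes2 := even_sum (2 * l + 1) hm hnm S l (by omega) (by omega)
      rw [show 2 * l + 1 - (l + 1) = l by omega] at hes1
      rw [show 2 * l + 1 - l = l + 1 by omega] at hes2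
      have hexpand : ∑ s ∈ Finset.range (2 * (l + 1)),
          cycCab (coarseS (2 * l + 1) S s) (l + 1) l
          = (∑ s ∈ Finset.range (2 * (l + 1)), cycC (coarseS (2 * l + 1) S s) (l + 1))
            - (∑ s ∈ Finset.range (2 * (l + 1)), cycC (coarseS (2 * l + 1) S s) l)
            - (2 * ((l : ℝ) + 1)) * S Finset.univ := by
        unfold cycCab
        rw [Finset.sum_sub_distrib, Finset.sum_sub_distrib]
        congr 1
        rw [Finset.sum_congr rfl fun s _ => even_univ (2 * l + 1) hm hnm S s,
          Finset.sum_const, Finset.card_range, nsmul_eq_mul]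
        push_cast
        ring
      rw [hexpand, hes1, hes2] at hsumpos
      -- hsumpos : 0 ≤ (l+1)*C(l+2) + l*C(l+1) - (l*C(l+1) + (l+1)*C(l)) - 2(l+1)*Su
      have hl1 : (0 : ℝ) < (l : ℝ) + 1 := by positivity
      have hfac : 0 ≤ ((l : ℝ) + 1) * (cycC S (l + 1 + 1) - cycC S l - 2 * S Finset.univ) := by
        push_cast at hsumpos
        nlinarith [hsumpos]
      have hX : 0 ≤ cycC S (l + 1 + 1) - cycC S l - 2 * S Finset.univ := by
        by_contra hneg
        push_neg at hneg
        nlinarith [hfac, hl1, hneg]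
      have hconc := cycC_concave S hSSA (a := l) (by omega)
      constructor
      · show 0 ≤ cycCab S (l + 1 + 1) (l + 1 - 1)
        rw [show l + 1 - 1 = l by omega]
        unfold cycCab
        linarith
      · show 0 ≤ cycCab S (l + 1) (l + 1 - 1)
        rw [show l + 1 - 1 = l by omega]
        unfold cycCab
        linarith
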